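/- Let Ē : [0,∞) → ℝ be continuous with Ē(0) = 1, differentiable on (0,∞) with continuous derivative, and suppose ∫_{T−t}^{T} Ē(s) ds = Ē(T−t) ∫₀ᵗ Ē(s) ds for all 0 < t < T. Then the limit c := lim_{t→0⁺} Ē'(t) exists in ℝ and Ē(t) = e^{c t} for all t ≥ 0. -/

import Mathlib

open MeasureTheory Set Filter intervalIntegral

/-- Functional-equation lemma from Case 4 (b₀, β, λ all nonzero) of the
affine-drift theorem: a continuous function `Ē` with `Ē 0 = 1`, differentiable
on `(0,∞)` with continuous derivative `Ē'`, satisfying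
`∫_{T−t}^{T} Ē = Ē(T−t) ∫₀ᵗ Ē` for all `0 < t < T`, is an exponential
`Ē(t) = exp (c t)` with `c = lim_{t→0⁺} Ē'(t)`. -/
theorem stmt_4 (Ebar E' : ℝ → ℝ)
    (hc : ContinuousOn Ebar (Set.Ici 0))
    (h0 : Ebar 0 = 1)
    (hderiv : ∀ t > 0, HasDerivAt Ebar (E' t) t)
    (hE'c : ContinuousOn E' (Set.Ioi 0))
    (hfun : ∀ t T : ℝ, 0 < t → t < T →
      (∫ s in (T - t)..T, Ebar s) = Ebar (T - t) * ∫ s in (0:ℝ)..t, Ebar s) :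
    ∃ c : ℝ, Filter.Tendsto E' (nhdsWithin 0 (Set.Ioi 0)) (nhds c) ∧
      ∀ t : ℝ, 0 ≤ t → Ebar t = Real.exp (c * t) := by
  -- g : continuous extension of Ebar to all of ℝ
  set g : ℝ → ℝ := fun s => Ebar (max s 0) with hg_def
  have hgcont : Continuous g :=
    hc.comp_continuous (continuous_id.max continuous_const) fun x => Set.mem_Ici.mpr (le_max_right _ _)
  have hg_eq : ∀ s : ℝ, 0 ≤ s → g s = Ebar s := by
    intro s hs; simp [hg_def, max_eq_left hs]
  have hg0 : g 0 = 1 := by rw [hg_eq 0 le_rfl, h0]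
  -- g = Ebar eventually near any positive point
  have hg_ev : ∀ v : ℝ, 0 < v → g =ᶠ[nhds v] Ebar := by
    intro v hv
    filter_upwards [isOpen_Ioi.mem_nhds hv] with s hs
    exact hg_eq s (le_of_lt hs)
  -- derivative of g at positive points
  have hgderiv : ∀ v : ℝ, 0 < v → HasDerivAt g (E' v) v := by
    intro v hv
    exact ((hg_ev v hv).hasDerivAt_iff).mpr (hderiv v hv)
  -- G : primitive of g
  set G : ℝ → ℝ := fun t => ∫ s in (0:ℝ)..t, g s with hG_def
  have hGderiv : ∀ v : ℝ, HasDerivAt G (g v) v := by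
    intro v
    exact intervalIntegral.integral_hasDerivAt_right
      (hgcont.intervalIntegrable 0 v)
      (hgcont.stronglyMeasurableAtFilter volume (nhds v)) hgcont.continuousAt
  have hG0 : G 0 = 0 := by simp [hG_def]
  -- the functional equation in terms of g and G
  have hfun' : ∀ t T : ℝ, 0 < t → t < T → G T - G (T - t) = g (T - t) * G t := by
    intro t T ht htT
    have h1 : G T - G (T - t) = ∫ s in (T - t)..T, g s :=
      intervalIntegral.integral_interval_sub_left
        (hgcont.intervalIntegrable 0 T) (hgcont.intervalIntegrable 0 (T - t))
    have h2 : (∫ s in (T - t)..T, g s) = ∫ s in (T - t)..T, Ebar s := by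
      apply intervalIntegral.integral_congr
      intro s hs
      rw [uIcc_of_le (by linarith)] at hs
      exact hg_eq s (le_trans (by linarith) hs.1)
    have h3 : G t = ∫ s in (0:ℝ)..t, Ebar s := by
      apply intervalIntegral.integral_congr
      intro s hs
      rw [uIcc_of_le (le_of_lt ht)] at hs
      exact hg_eq s hs.1
    rw [h1, h2, h3, hfun t T ht htT, hg_eq (T - t) (by linarith)]
  -- key identity: E' u * G t = g u * (g t - 1) for u, t > 0
  have key : ∀ u t : ℝ, 0 < u → 0 < t → E' u * G t = g u * (g t - 1) := by
    intro u t hu ht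
    set T := u + t with hT
    have hTt : T - t = u := by ring
    -- φ(τ) = G T - G (T - τ) - g (T - τ) * G τ vanishes near t
    have hev : (fun τ => G T - G (T - τ) - g (T - τ) * G τ) =ᶠ[nhds t] (fun _ => (0:ℝ)) := by
      filter_upwards [isOpen_Ioo.mem_nhds
        (show t ∈ Ioo 0 T by exact ⟨ht, by simp [hT]; linarith⟩)] with τ hτ
      have := hfun' τ T hτ.1 hτ.2
      linarith
    -- inner function τ ↦ T - τ has derivative -1
    have hin : HasDerivAt (fun τ : ℝ => T - τ) (-1) t := by
      exact ((hasDerivAt_const t T).sub (hasDerivAt_id t)).congr_deriv (by ring)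
    -- derivative of τ ↦ G (T - τ)
    have hd1 : HasDerivAt (fun τ : ℝ => G (T - τ)) (-(g u)) t := by
      have := (hGderiv (T - t)).comp t hin
      exact this.congr_deriv (by rw [hTt]; ring)
    -- derivative of τ ↦ g (T - τ)
    have hd2 : HasDerivAt (fun τ : ℝ => g (T - τ)) (-(E' u)) t := by
      have := (hgderiv (T - t) (by rw [hTt]; exact hu)).comp t hin
      exact this.congr_deriv (by rw [hTt]; ring)
    -- derivative of φ
    have hd : HasDerivAt (fun τ => G T - G (T - τ) - g (T - τ) * G τ)
        (0 - (-(g u)) - ((-(E' u)) * G t + g u * g t)) t := by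
      have := ((hasDerivAt_const t (G T)).sub hd1).sub (hd2.mul (hGderiv t))
      exact this.congr_deriv (by rw [hTt])
    have hzero : HasDerivAt (fun τ => G T - G (T - τ) - g (T - τ) * G τ) 0 t :=
      (hev.hasDerivAt_iff).mpr (hasDerivAt_const t 0)
    have := hd.unique hzero
    nlinarith [this]
  -- find t₀ > 0 with G t₀ > 0
  have hslope : Tendsto (slope G 0) (nhdsWithin 0 {(0:ℝ)}ᶜ) (nhds 1) := by
    have := (hasDerivAt_iff_tendsto_slope).mp (hGderiv 0)
    rwa [hg0] at this
  have hslope' : Tendsto (slope G 0) (nhdsWithin 0 (Ioi 0)) (nhds 1) :=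
    hslope.mono_left (nhdsWithin_mono 0 (fun x hx => ne_of_gt hx))
  obtain ⟨t₀, ht₀s, ht₀⟩ :
      ∃ t₀, slope G 0 t₀ > 1/2 ∧ t₀ ∈ Ioi (0:ℝ) := by
    have h1 : ∀ᶠ x in nhdsWithin 0 (Ioi 0), slope G 0 x > 1/2 :=
      hslope' (eventually_gt_nhds (by norm_num) : ∀ᶠ y in nhds (1:ℝ), y > 1/2)
    exact (h1.and self_mem_nhdsWithin).exists
  have ht₀pos : (0:ℝ) < t₀ := ht₀
  have hGt₀ : 0 < G t₀ := by
    have : slope G 0 t₀ = G t₀ / t₀ := by simp [slope_def_field, hG0]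
    rw [this] at ht₀s
    have := mul_pos (lt_trans (by norm_num) ht₀s) ht₀pos
    rwa [div_mul_cancel₀ _ (ne_of_gt ht₀pos)] at this
  -- the constant c
  set k : ℝ := (g t₀ - 1) / G t₀ with hk_def
  have hE'g : ∀ u : ℝ, 0 < u → E' u = k * g u := by
    intro u hu
    have := key u t₀ hu ht₀pos
    rw [hk_def]
    field_simp
    linarith
  -- ψ(v) = g v * exp(-(k*v)) is constant equal to 1 on [0,∞)
  set ψ : ℝ → ℝ := fun v => g v * Real.exp (-(k * v)) with hψ_def
  have hψcont : Continuous ψ := by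
    exact hgcont.mul (Real.continuous_exp.comp (continuous_const.mul continuous_id).neg)
  have hψderiv : ∀ x : ℝ, 0 < x → HasDerivAt ψ 0 x := by
    intro x hx
    have he : HasDerivAt (fun v : ℝ => Real.exp (-(k * v))) (-k * Real.exp (-(k * x))) x := by
      have hi : HasDerivAt (fun v : ℝ => -(k * v)) (-k) x := by
        exact (((hasDerivAt_id x).const_mul k).neg).congr_deriv (by simp)
      exact ((Real.hasDerivAt_exp (-(k * x))).comp x hi).congr_deriv (by ring : Real.exp (-(k * x)) * -k = -k * Real.exp (-(k * x)))
    have := (hgderiv x hx).mul he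
    have heq : E' x * Real.exp (-(k * x)) + g x * (-k * Real.exp (-(k * x))) = 0 := by
      rw [hE'g x hx]; ring
    rwa [heq] at this
  have hψconst : ∀ b : ℝ, 0 ≤ b → ψ b = 1 := by
    intro b hb
    rcases eq_or_lt_of_le hb with hb0 | hb0
    · simp [hψ_def, ← hb0, hg0]
    -- on [a, b] for 0 < a ≤ b, ψ b = ψ a; then let a → 0⁺
    have hab : ∀ a : ℝ, 0 < a → a ≤ b → ψ b = ψ a := by
      intro a ha hab
      have := constant_of_has_deriv_right_zero
        (f := ψ) (a := a) (b := b) (hψcont.continuousOn)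
        (fun x hx => (hψderiv x (lt_of_lt_of_le ha hx.1)).hasDerivWithinAt)
        b ⟨hab, le_rfl⟩
      exact this
    have htend : Tendsto ψ (nhdsWithin 0 (Ioi 0)) (nhds (ψ 0)) :=
      (hψcont.tendsto 0).mono_left nhdsWithin_le_nhds
    have hconst : Tendsto ψ (nhdsWithin 0 (Ioi 0)) (nhds (ψ b)) := by
      apply Tendsto.congr' _ tendsto_const_nhds
      filter_upwards [Ioo_mem_nhdsGT_of_mem (show (0:ℝ) ∈ Ico 0 b from ⟨le_rfl, hb0⟩)] with a ha
      exact hab a ha.1 (le_of_lt ha.2)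
    have := tendsto_nhds_unique hconst htend
    rw [this]
    simp [hψ_def, hg0]
  have hgexp : ∀ t : ℝ, 0 ≤ t → g t = Real.exp (k * t) := by
    intro t htge
    have := hψconst t htge
    rw [hψ_def] at this
    have hne : Real.exp (-(k * t)) ≠ 0 := Real.exp_ne_zero _
    field_simp at this
    rw [Real.exp_neg] at this
    field_simp at this
    linarith [this]
  refine ⟨k, ?_, ?_⟩
  · -- limit of E' at 0⁺
    have h1 : Tendsto (fun u => k * g u) (nhdsWithin 0 (Ioi 0)) (nhds (k * g 0)) :=
      ((continuous_const.mul hgcont).tendsto 0).mono_left nhdsWithin_le_nhds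
    rw [hg0, mul_one] at h1
    apply Tendsto.congr' _ h1
    filter_upwards [self_mem_nhdsWithin] with u hu
    exact (hE'g u hu).symm
  · intro t htge
    rw [← hg_eq t htge]
    exact hgexp t htge
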